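/- Let A : [n] → (0,1] and suppose the demand circulation property Σ_j φ_{ji} q_{ji} = Σ_j φ_{ij} q_{ij} for all i, and the supply circulation property Σ_j A_j φ_{ji} q_{ji} = A_i Σ_j φ_{ij} q_{ij} for all i, hold, where φ_{ij} q_{ij} ≥ 0 and the directed graph with edges {(i,j) : φ_{ij} q_{ij} > 0} is strongly connected. Then A_i = A_j for all i, j. -/
import Mathlib


open Finset

/-- If availabilities `A_i ∈ (0,1]` satisfy both demand circulation and supply
circulation with respect to nonnegative effective demand rates `φq`, and the support
graph of `φq` is strongly connected, then all availabilities are equal. -/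
theorem equal_availabilities (n : ℕ) (A : Fin n → ℝ)
    (hA : ∀ i, A i ∈ Set.Ioc (0 : ℝ) 1)
    (φq : Fin n → Fin n → ℝ) (hφq : ∀ i j, 0 ≤ φq i j)
    (hdemand : ∀ i : Fin n, ∑ j, φq j i = ∑ j, φq i j)
    (hsupply : ∀ i : Fin n, ∑ j, A j * φq j i = A i * ∑ j, φq i j)
    (hconn : ∀ i j : Fin n, Relation.ReflTransGen (fun a b => 0 < φq a b) i j) :
    ∀ i j, A i = A j := by
  intro i j
  obtain ⟨m, -, hm⟩ := Finset.exists_min_image Finset.univ A ⟨i, Finset.mem_univ i⟩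
  have key : ∀ b, A b = A m → ∀ a, 0 < φq a b → A a = A m := by
    intro b hb a hab
    have hsum : ∑ k, (A k - A m) * φq k b = 0 := by
      have h1 := hsupply b
      have h2 := hdemand b
      have : ∑ k, (A k - A m) * φq k b
          = (∑ k, A k * φq k b) - A m * ∑ k, φq k b := by
        simp [sub_mul, Finset.sum_sub_distrib, Finset.mul_sum]
      rw [this, h1, h2, hb]; ring
    have hterm : ∀ k ∈ Finset.univ, 0 ≤ (A k - A m) * φq k b := fun k _ =>
      mul_nonneg (sub_nonneg.2 (hm k (Finset.mem_univ k))) (hφq k b)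
    have hz := (Finset.sum_eq_zero_iff_of_nonneg hterm).1 hsum a (Finset.mem_univ a)
    rcases mul_eq_zero.1 hz with h | h
    · linarith
    · exact absurd h (ne_of_gt hab)
  have all : ∀ a, A a = A m := by
    intro a
    induction hconn a m using Relation.ReflTransGen.head_induction_on with
    | refl => rfl
    | head hab _ ih => exact key _ ih _ hab
  rw [all i, all j]
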